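/- MR convergence rate for positive definite part: if M ∈ ℂⁿˣⁿ satisfies Re(x†Mx) ≥ α‖x‖² for all x and ‖Mx‖ ≤ β‖x‖, with α > 0, then for any nonzero r, min_t ‖r − tMr‖² ≤ (1 − α²/β²)‖r‖²; hence the MR iteration residuals satisfy ‖rᵐ‖ ≤ (1 − α²/β²)^{m/2}‖r⁰‖. -/

import Mathlib

lemma key19 {n : ℕ} (α β : ℝ) (hα : 0 < α) (hβ : 0 < β)
    (f : EuclideanSpace ℂ (Fin n) →L[ℂ] EuclideanSpace ℂ (Fin n))
    (hlow : ∀ x : EuclideanSpace ℂ (Fin n), α * ‖x‖ ^ 2 ≤ ((inner ℂ x (f x) : ℂ)).re)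
    (hup : ∀ x : EuclideanSpace ℂ (Fin n), ‖f x‖ ≤ β * ‖x‖)
    (x : EuclideanSpace ℂ (Fin n)) (hx : x ≠ 0) :
    ∃ τ : ℂ, ‖x - τ • f x‖ ^ 2 ≤ (1 - α ^ 2 / β ^ 2) * ‖x‖ ^ 2 := by
  set y := f x with hy
  have hxn : 0 < ‖x‖ := norm_pos_iff.mpr hx
  have hRe : α * ‖x‖ ^ 2 ≤ ((inner ℂ x y : ℂ)).re := hlow x
  have hyn : 0 < ‖y‖ := by
    rcases eq_or_ne y 0 with h | h
    · exfalso
      rw [h] at hRe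
      simp at hRe
      nlinarith [pow_pos hxn 2]
    · exact norm_pos_iff.mpr h
  set a : ℂ := inner ℂ x y with ha
  refine ⟨(starRingEnd ℂ) a / (‖y‖ ^ 2 : ℂ), ?_⟩
  have han : α * ‖x‖ ^ 2 ≤ ‖a‖ := le_trans hRe (Complex.re_le_norm a)
  have hyb : ‖y‖ ≤ β * ‖x‖ := hup x
  set c : ℂ := (starRingEnd ℂ) a / (‖y‖ ^ 2 : ℂ) with hc
  have hinner : (inner ℂ x (c • y) : ℂ) = ((‖a‖ ^ 2 / ‖y‖ ^ 2 : ℝ) : ℂ) := by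
    rw [inner_smul_right, ← ha, hc, div_mul_eq_mul_div, Complex.conj_mul']
    push_cast
    ring
  have hnc : ‖c • y‖ ^ 2 = ‖a‖ ^ 2 / ‖y‖ ^ 2 := by
    rw [norm_smul, hc, norm_div]
    simp
    field_simp
  have hsq : ‖x - c • y‖ ^ 2 = ‖x‖ ^ 2 - ‖a‖ ^ 2 / ‖y‖ ^ 2 := by
    rw [@norm_sub_sq ℂ _ _ _ _ x (c • y), hinner, hnc]
    simp only [RCLike.re_to_complex, Complex.ofReal_re]
    ring
  rw [hsq]
  have h1 : (α * ‖x‖ ^ 2) ^ 2 / (β * ‖x‖) ^ 2 ≤ ‖a‖ ^ 2 / ‖y‖ ^ 2 := by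
    apply div_le_div₀ (by positivity) (pow_le_pow_left₀ (by positivity) han 2)
      (by positivity) (pow_le_pow_left₀ (by positivity) hyb 2)
  have h2 : (α * ‖x‖ ^ 2) ^ 2 / (β * ‖x‖) ^ 2 = α ^ 2 / β ^ 2 * ‖x‖ ^ 2 := by
    field_simp
  nlinarith [h1]

theorem stmt19 {n : ℕ} (M : Matrix (Fin n) (Fin n) ℂ) (α β : ℝ) (hα : 0 < α)
    (f : EuclideanSpace ℂ (Fin n) →L[ℂ] EuclideanSpace ℂ (Fin n))
    (hf : f = Matrix.toEuclideanCLM (𝕜 := ℂ) M)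
    (hlow : ∀ x : EuclideanSpace ℂ (Fin n), α * ‖x‖ ^ 2 ≤ ((inner ℂ x (f x) : ℂ)).re)
    (hup : ∀ x : EuclideanSpace ℂ (Fin n), ‖f x‖ ≤ β * ‖x‖)
    (r : ℕ → EuclideanSpace ℂ (Fin n)) (t : ℕ → ℂ)
    (hrec : ∀ m, r (m + 1) = r m - t m • f (r m))
    (hmin : ∀ m, ∀ s : ℂ, ‖r (m + 1)‖ ≤ ‖r m - s • f (r m)‖) :
    (∀ x : EuclideanSpace ℂ (Fin n), x ≠ 0 →
      ∃ τ : ℂ, ‖x - τ • f x‖ ^ 2 ≤ (1 - α ^ 2 / β ^ 2) * ‖x‖ ^ 2) ∧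
    ∀ m : ℕ, ‖r m‖ ≤ (1 - α ^ 2 / β ^ 2) ^ ((m : ℝ) / 2) * ‖r 0‖ := by
  rcases Nat.eq_zero_or_pos n with hn | hn
  · subst hn
    have hz : ∀ m, r m = 0 := fun m => Subsingleton.elim _ _
    constructor
    · intro x hx
      exact absurd (Subsingleton.elim x 0) hx
    · intro m
      simp [hz]
  · -- get α ≤ β from a unit vector
    have hβ : α ≤ β := by
      set e : EuclideanSpace ℂ (Fin n) := EuclideanSpace.single ⟨0, hn⟩ 1 with he
      have hne : ‖e‖ = 1 := by simp [he, EuclideanSpace.norm_single]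
      have h1 := hlow e
      have h2 : ((inner ℂ e (f e) : ℂ)).re ≤ ‖e‖ * ‖f e‖ := re_inner_le_norm (𝕜 := ℂ) e (f e)
      have h3 := hup e
      rw [hne] at h1 h2 h3
      simp at h1 h2 h3
      nlinarith
    have hβ0 : 0 < β := lt_of_lt_of_le hα hβ
    set C : ℝ := 1 - α ^ 2 / β ^ 2 with hC
    have hC0 : 0 ≤ C := by
      rw [hC]
      have : α ^ 2 / β ^ 2 ≤ 1 := by
        rw [div_le_one (by positivity)]
        nlinarith
      linarith
    have key := fun x hx => key19 α β hα hβ0 f hlow hup x hx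
    refine ⟨key, ?_⟩
    have step : ∀ m, ‖r (m + 1)‖ ≤ Real.sqrt C * ‖r m‖ := by
      intro m
      rcases eq_or_ne (r m) 0 with h | h
      · have := hmin m 0
        simp [h] at this
        simp [this]
        positivity
      · obtain ⟨τ, hτ⟩ := key (r m) h
        have h1 : ‖r (m + 1)‖ ^ 2 ≤ C * ‖r m‖ ^ 2 := le_trans
          (pow_le_pow_left₀ (norm_nonneg _) (hmin m τ) 2) hτ
        have h2 : ‖r (m + 1)‖ = Real.sqrt (‖r (m + 1)‖ ^ 2) :=
          (Real.sqrt_sq (norm_nonneg _)).symm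
        rw [h2]
        calc Real.sqrt (‖r (m + 1)‖ ^ 2) ≤ Real.sqrt (C * ‖r m‖ ^ 2) :=
              Real.sqrt_le_sqrt h1
          _ = Real.sqrt C * ‖r m‖ := by
              rw [Real.sqrt_mul hC0, Real.sqrt_sq (norm_nonneg _)]
    have main : ∀ m, ‖r m‖ ≤ Real.sqrt C ^ m * ‖r 0‖ := by
      intro m
      induction m with
      | zero => simp
      | succ m ih =>
        calc ‖r (m + 1)‖ ≤ Real.sqrt C * ‖r m‖ := step m
          _ ≤ Real.sqrt C * (Real.sqrt C ^ m * ‖r 0‖) := by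
              apply mul_le_mul_of_nonneg_left ih (Real.sqrt_nonneg _)
          _ = Real.sqrt C ^ (m + 1) * ‖r 0‖ := by ring
    intro m
    have hrw : C ^ ((m : ℝ) / 2) = Real.sqrt C ^ m := by
      rw [Real.sqrt_eq_rpow, ← Real.rpow_natCast (C ^ (1/2 : ℝ)) m,
        ← Real.rpow_mul hC0]
      ring_nf
    rw [hrw]
    exact main m
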